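/- The inverse rule ∨⁻¹ is height-preserving admissible in nK + ♦_{kX} + cut: if there is a proof π of Γ{A ∨ B}, then there is a proof π' of Γ{A, B} with h(π') ≤ h(π). -/
import Mathlib


/-! Formulas of modal logic in negation normal form. -/
inductive Formula : Type
  | pos : ℕ → Formula
  | neg : ℕ → Formula
  | and : Formula → Formula → Formula
  | or : Formula → Formula → Formula
  | box : Formula → Formula
  | dia : Formula → Formula
  deriving DecidableEq

namespace Formula

/-- Negation by de Morgan duality. -/
def negf : Formula → Formula
  | pos p => neg p
  | neg p => pos p
  | and A B => or A.negf B.negf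
  | or A B => and A.negf B.negf
  | box A => dia A.negf
  | dia A => box A.negf

/-- The (modal) degree of a formula. -/
def deg : Formula → ℕ
  | pos _ => 0
  | neg _ => 0
  | and A B => A.deg + B.deg
  | or A B => A.deg + B.deg
  | box A => A.deg + 1
  | dia A => A.deg + 1

/-- Implication `A ⊃ B := Ā ∨ B`. -/
def impl (A B : Formula) : Formula := or A.negf B

def bot : Formula := and (pos 0) (neg 0)

/-- `♦ⁿ A`. -/
def diaIter : ℕ → Formula → Formula
  | 0, A => A
  | n+1, A => dia (diaIter n A)

end Formula

/-- Nested sequents: finite multisets of formulas and boxed sequents,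
represented as list-like trees considered up to permutation (`NSeq.Perm`). -/
inductive NSeq : Type
  | nil : NSeq
  | fcons : Formula → NSeq → NSeq
  | bcons : NSeq → NSeq → NSeq

namespace NSeq

/-- Multiset union of nested sequents. -/
def append : NSeq → NSeq → NSeq
  | nil, Δ => Δ
  | fcons A Γ, Δ => fcons A (Γ.append Δ)
  | bcons B Γ, Δ => bcons B (Γ.append Δ)

/-- Multiset-like equivalence of nested sequents (hereditary permutation). -/
inductive Perm : NSeq → NSeq → Prop
  | nil : Perm nil nil
  | fcons (A : Formula) {Γ Δ : NSeq} : Perm Γ Δ → Perm (fcons A Γ) (fcons A Δ)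
  | bcons {B B' Γ Δ : NSeq} : Perm B B' → Perm Γ Δ → Perm (bcons B Γ) (bcons B' Δ)
  | swapff (A B : Formula) (Γ : NSeq) : Perm (fcons A (fcons B Γ)) (fcons B (fcons A Γ))
  | swapfb (A : Formula) (B Γ : NSeq) : Perm (fcons A (bcons B Γ)) (bcons B (fcons A Γ))
  | swapbf (A : Formula) (B Γ : NSeq) : Perm (bcons B (fcons A Γ)) (fcons A (bcons B Γ))
  | swapbb (B C Γ : NSeq) : Perm (bcons B (bcons C Γ)) (bcons C (bcons B Γ))
  | trans {Γ Δ Θ : NSeq} : Perm Γ Δ → Perm Δ Θ → Perm Γ Θ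

/-- The corresponding formula of a nested sequent. -/
def form : NSeq → Formula
  | nil => Formula.bot
  | fcons A Γ => Formula.or A Γ.form
  | bcons B Γ => Formula.or Γ.form (Formula.box B.form)

end NSeq

/-- Contexts: nested sequents with a single hole. -/
inductive Ctx : Type
  | hole : Ctx
  | fcons : Formula → Ctx → Ctx
  | scons : NSeq → Ctx → Ctx
  | binto : Ctx → NSeq → Ctx

namespace Ctx

/-- Filling the hole of a context with a nested sequent. -/
def fill : Ctx → NSeq → NSeq
  | hole, Δ => Δ
  | fcons A C, Δ => NSeq.fcons A (C.fill Δ)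
  | scons S C, Δ => NSeq.bcons S (C.fill Δ)
  | binto C S, Δ => NSeq.bcons (C.fill Δ) S

/-- The depth of a context. -/
def depth : Ctx → ℕ
  | hole => 0
  | fcons _ C => C.depth
  | scons _ C => C.depth
  | binto C _ => C.depth + 1

end Ctx

/-- `nestBox [Δ₁, …, Δₖ] Θ = [Δ₁, [Δ₂, [ … , [Δₖ, Θ'] … ]]]` where the innermost
box contains `Δₖ` together with the box `[Θ]`; i.e. a chain of `k+1` nested boxes
whose `i`-th box contains `Δᵢ` and whose innermost box is `[Θ]`. -/
def nestBox : List NSeq → NSeq → NSeq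
  | [], Θ => NSeq.bcons Θ NSeq.nil
  | Δ :: rest, Θ => NSeq.bcons (Δ.append (nestBox rest Θ)) NSeq.nil

/-- `iterBox n Δ`: `n` nested boxes around `Δ`. -/
def iterBox : ℕ → NSeq → NSeq
  | 0, Δ => Δ
  | n+1, Δ => NSeq.bcons (iterBox n Δ) NSeq.nil

/-- Proofs in the nested sequent system `nK` extended with the propagation rules
`♦ₖₙ` for `n ∈ Xk`, the propagation rules `♦₄ₙ` for `n ∈ X4`, and the cut rule
restricted to cut formulas whose degree satisfies `ρ`.  The index `h` is an upper
bound on the height of the proof. -/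
inductive Prf (Xk X4 : Set ℕ) (ρ : ℕ → Prop) : ℕ → NSeq → Prop
  | id (Γ : Ctx) (p : ℕ) (h : ℕ) :
      Prf Xk X4 ρ h (Γ.fill (NSeq.fcons (.pos p) (NSeq.fcons (.neg p) NSeq.nil)))
  | orR {h : ℕ} (Γ : Ctx) (A B : Formula) :
      Prf Xk X4 ρ h (Γ.fill (NSeq.fcons A (NSeq.fcons B NSeq.nil))) →
      Prf Xk X4 ρ (h+1) (Γ.fill (NSeq.fcons (.or A B) NSeq.nil))
  | andR {h : ℕ} (Γ : Ctx) (A B : Formula) :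
      Prf Xk X4 ρ h (Γ.fill (NSeq.fcons A NSeq.nil)) →
      Prf Xk X4 ρ h (Γ.fill (NSeq.fcons B NSeq.nil)) →
      Prf Xk X4 ρ (h+1) (Γ.fill (NSeq.fcons (.and A B) NSeq.nil))
  | boxR {h : ℕ} (Γ : Ctx) (A : Formula) :
      Prf Xk X4 ρ h (Γ.fill (NSeq.bcons (NSeq.fcons A NSeq.nil) NSeq.nil)) →
      Prf Xk X4 ρ (h+1) (Γ.fill (NSeq.fcons (.box A) NSeq.nil))
  | diaR {h : ℕ} (Γ : Ctx) (A : Formula) (Δ : NSeq) :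
      Prf Xk X4 ρ h (Γ.fill (NSeq.fcons (.dia A) (NSeq.bcons (NSeq.fcons A Δ) NSeq.nil))) →
      Prf Xk X4 ρ (h+1) (Γ.fill (NSeq.fcons (.dia A) (NSeq.bcons Δ NSeq.nil)))
  | propk {h : ℕ} (Γ : Ctx) (A : Formula) (Δs : List NSeq) (Δn : NSeq)
      (hn : Δs.length + 1 ∈ Xk) :
      Prf Xk X4 ρ h (Γ.fill (NSeq.fcons (.dia A) (nestBox Δs (NSeq.fcons A Δn)))) →
      Prf Xk X4 ρ (h+1) (Γ.fill (NSeq.fcons (.dia A) (nestBox Δs Δn)))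
  | prop4 {h : ℕ} (Γ : Ctx) (A : Formula) (Δs : List NSeq) (Δl : NSeq)
      (hn : Δs.length + 2 ∈ X4) :
      Prf Xk X4 ρ h (Γ.fill (NSeq.fcons (.dia A) (nestBox Δs (NSeq.fcons (.dia A) Δl)))) →
      Prf Xk X4 ρ (h+1) (Γ.fill (NSeq.fcons (.dia A) (nestBox Δs Δl)))
  | cut {h : ℕ} (Γ : Ctx) (A : Formula) (hA : ρ A.deg) :
      Prf Xk X4 ρ h (Γ.fill (NSeq.fcons A NSeq.nil)) →
      Prf Xk X4 ρ h (Γ.fill (NSeq.fcons A.negf NSeq.nil)) →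
      Prf Xk X4 ρ (h+1) (Γ.fill NSeq.nil)
  | exch {h : ℕ} {Γ Δ : NSeq} : NSeq.Perm Γ Δ → Prf Xk X4 ρ h Γ → Prf Xk X4 ρ h Δ

/-- No cut formula allowed: the cut-free system. -/
def cutFree : ℕ → Prop := fun _ => False

/-- Unrestricted cut. -/
def cutAll : ℕ → Prop := fun _ => True

/-- Provability (some proof of some height). -/
def Provable (Xk X4 : Set ℕ) (ρ : ℕ → Prop) (Γ : NSeq) : Prop := ∃ h, Prf Xk X4 ρ h Γ

/-- Hilbert-style provability in `K + 4^X`: classical propositional logic,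
axiom k, modus ponens, necessitation, and quasi-transitivity `♦ⁿA ⊃ ♦A` for `n ∈ X`. -/
inductive KProv (X : Set ℕ) : Formula → Prop
  | ax1 (A B : Formula) : KProv X (A.impl (B.impl A))
  | ax2 (A B C : Formula) : KProv X ((A.impl B).impl ((A.impl (B.impl C)).impl (A.impl C)))
  | andI (A B : Formula) : KProv X (A.impl (B.impl (A.and B)))
  | andE1 (A B : Formula) : KProv X ((A.and B).impl A)
  | andE2 (A B : Formula) : KProv X ((A.and B).impl B)
  | orI1 (A B : Formula) : KProv X (A.impl (A.or B))
  | orI2 (A B : Formula) : KProv X (B.impl (A.or B))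
  | orE (A B C : Formula) : KProv X ((A.impl C).impl ((B.impl C).impl ((A.or B).impl C)))
  | negI (A B : Formula) : KProv X ((A.impl B).impl ((A.impl B.negf).impl A.negf))
  | negE (A : Formula) : KProv X (A.negf.negf.impl A)
  | axK (A B : Formula) :
      KProv X ((Formula.box (A.impl B)).impl ((Formula.box A).impl (Formula.box B)))
  | mp {A B : Formula} : KProv X (A.impl B) → KProv X A → KProv X B
  | nec {A : Formula} : KProv X A → KProv X (Formula.box A)
  | path {n : ℕ} (hn : n ∈ X) (A : Formula) :
      KProv X ((Formula.diaIter n A).impl (Formula.dia A))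

/-- The approximations `X_p` of the completion of `X`. -/
def compStep (X : Set ℕ) : ℕ → Set ℕ
  | 0 => X
  | p+1 => compStep X p ∪ {k | ∃ m n, m ∈ compStep X p ∧ n ∈ compStep X p ∧ k = m + n - 1}

/-- The completion `X̂` of `X`. -/
def completion (X : Set ℕ) : Set ℕ := ⋃ p, compStep X p

/-! ### Auxiliary development for ∨⁻¹ admissibility -/

namespace OrInv

open NSeq

/-- Replace some top-level occurrences (at any depth) of `A ∨ B` by the pair `A, B`. -/
inductive ORep (A B : Formula) : NSeq → NSeq → Prop
  | nil : ORep A B .nil .nil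
  | fcons (F : Formula) {Γ Δ} : ORep A B Γ Δ → ORep A B (.fcons F Γ) (.fcons F Δ)
  | bcons {S S' Γ Δ} : ORep A B S S' → ORep A B Γ Δ → ORep A B (.bcons S Γ) (.bcons S' Δ)
  | rep {Γ Δ} : ORep A B Γ Δ → ORep A B (.fcons (.or A B) Γ) (.fcons A (.fcons B Δ))

/-- The analogous relation on contexts. -/
inductive ORepC (A B : Formula) : Ctx → Ctx → Prop
  | hole : ORepC A B .hole .hole
  | fcons (F : Formula) {C C'} : ORepC A B C C' → ORepC A B (.fcons F C) (.fcons F C')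
  | scons {S S' C C'} : ORep A B S S' → ORepC A B C C' →
      ORepC A B (.scons S C) (.scons S' C')
  | binto {C C' S S'} : ORepC A B C C' → ORep A B S S' →
      ORepC A B (.binto C S) (.binto C' S')
  | rep {C C'} : ORepC A B C C' → ORepC A B (.fcons (.or A B) C) (.fcons A (.fcons B C'))

theorem ORep.refl (A B : Formula) : ∀ Γ, ORep A B Γ Γ
  | .nil => .nil
  | .fcons F Γ => .fcons F (ORep.refl A B Γ)
  | .bcons S Γ => .bcons (ORep.refl A B S) (ORep.refl A B Γ)

theorem ORepC.refl (A B : Formula) : ∀ C, ORepC A B C C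
  | .hole => .hole
  | .fcons F C => .fcons F (ORepC.refl A B C)
  | .scons S C => .scons (ORep.refl A B S) (ORepC.refl A B C)
  | .binto C S => .binto (ORepC.refl A B C) (ORep.refl A B S)

theorem ORep.append {A B : Formula} : ∀ {Γ Γ' Δ Δ'}, ORep A B Γ Γ' → ORep A B Δ Δ' →
    ORep A B (Γ.append Δ) (Γ'.append Δ')
  | _, _, _, _, .nil, h => h
  | _, _, _, _, .fcons F hg, h => .fcons F (ORep.append hg h)
  | _, _, _, _, .bcons hs hg, h => .bcons hs (ORep.append hg h)
  | _, _, _, _, .rep hg, h => .rep (ORep.append hg h)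

theorem ORep.fill {A B : Formula} : ∀ {C C' : Ctx} {K K' : NSeq}, ORepC A B C C' →
    ORep A B K K' → ORep A B (C.fill K) (C'.fill K')
  | _, _, _, _, .hole, h => h
  | _, _, _, _, .fcons F hc, h => .fcons F (ORep.fill hc h)
  | _, _, _, _, .scons hs hc, h => .bcons hs (ORep.fill hc h)
  | _, _, _, _, .binto hc hs, h => .bcons (ORep.fill hc h) hs
  | _, _, _, _, .rep hc, h => .rep (ORep.fill hc h)

theorem ORep.nestBox {A B : Formula} {Δs Δs' : List NSeq} {Θ Θ' : NSeq}
    (hl : List.Forall₂ (ORep A B) Δs Δs') (h : ORep A B Θ Θ') :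
    ORep A B (nestBox Δs Θ) (nestBox Δs' Θ') := by
  induction hl with
  | nil => exact .bcons h .nil
  | cons hd _ ih => exact .bcons (hd.append ih) .nil

/-- Inversion of `ORep` along a context split. -/
theorem fill_split {A B : Formula} : ∀ (D : Ctx) {K E}, ORep A B (D.fill K) E →
    ∃ D' K', E = D'.fill K' ∧ ORepC A B D D' ∧ ORep A B K K' := by
  intro D
  induction D with
  | hole => intro K E h; exact ⟨.hole, E, rfl, .hole, h⟩
  | fcons F C ih =>
    intro K E h
    cases h with
    | fcons _ h =>
      obtain ⟨D', K', rfl, hc, hk⟩ := ih h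
      exact ⟨.fcons F D', K', rfl, .fcons F hc, hk⟩
    | rep h =>
      obtain ⟨D', K', rfl, hc, hk⟩ := ih h
      exact ⟨.fcons A (.fcons B D'), K', rfl, .rep hc, hk⟩
  | scons S C ih =>
    intro K E h
    cases h with
    | bcons hs h =>
      obtain ⟨D', K', rfl, hc, hk⟩ := ih h
      exact ⟨.scons _ D', K', rfl, .scons hs hc, hk⟩
  | binto C S ih =>
    intro K E h
    cases h with
    | bcons hs h =>
      obtain ⟨D', K', rfl, hc, hk⟩ := ih hs
      exact ⟨.binto D' _, K', rfl, .binto hc h, hk⟩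

theorem append_split {A B : Formula} : ∀ {Γ Δ E}, ORep A B (Γ.append Δ) E →
    ∃ Γ' Δ', E = Γ'.append Δ' ∧ ORep A B Γ Γ' ∧ ORep A B Δ Δ' := by
  intro Γ
  induction Γ with
  | nil => intro Δ E h; exact ⟨.nil, E, rfl, .nil, h⟩
  | fcons F Γt ih =>
    intro Δ E h
    cases h with
    | fcons _ h =>
      obtain ⟨Γ', Δ', rfl, hg, hd⟩ := ih h
      exact ⟨.fcons F Γ', Δ', rfl, .fcons F hg, hd⟩
    | rep h =>
      obtain ⟨Γ', Δ', rfl, hg, hd⟩ := ih h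
      exact ⟨.fcons A (.fcons B Γ'), Δ', rfl, .rep hg, hd⟩
  | bcons S Γt ihS ih =>
    intro Δ E h
    cases h with
    | bcons hs h =>
      obtain ⟨Γ', Δ', rfl, hg, hd⟩ := ih h
      exact ⟨.bcons _ Γ', Δ', rfl, .bcons hs hg, hd⟩

theorem nestBox_split {A B : Formula} : ∀ {Δs : List NSeq} {Θ E}, ORep A B (nestBox Δs Θ) E →
    ∃ Δs' Θ', E = nestBox Δs' Θ' ∧ List.Forall₂ (ORep A B) Δs Δs' ∧ ORep A B Θ Θ' := by
  intro Δs
  induction Δs with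
  | nil =>
    intro Θ E h
    cases h with
    | bcons hs h => cases h; exact ⟨[], _, rfl, .nil, hs⟩
  | cons Δ rest ih =>
    intro Θ E h
    cases h with
    | bcons hs h =>
      cases h
      obtain ⟨Δ', Y', rfl, hg, hy⟩ := append_split hs
      obtain ⟨Δs', Θ', rfl, hl, ht⟩ := ih hy
      exact ⟨Δ' :: Δs', Θ', rfl, .cons hg hl, ht⟩

/-! ### Perm helpers -/

theorem Perm.refl : ∀ Γ, NSeq.Perm Γ Γ
  | .nil => .nil
  | .fcons F Γ => .fcons F (Perm.refl Γ)
  | .bcons S Γ => .bcons (Perm.refl S) (Perm.refl Γ)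

theorem perm_append_left : ∀ (Γ : NSeq) {Δ Δ'}, NSeq.Perm Δ Δ' →
    NSeq.Perm (Γ.append Δ) (Γ.append Δ')
  | .nil, _, _, h => h
  | .fcons F Γ, _, _, h => .fcons F (perm_append_left Γ h)
  | .bcons S Γ, _, _, h => .bcons (Perm.refl S) (perm_append_left Γ h)

theorem perm_fcons_mid (P : Formula) : ∀ (Γ Δ : NSeq),
    NSeq.Perm (.fcons P (Γ.append Δ)) (Γ.append (.fcons P Δ))
  | .nil, Δ => Perm.refl _
  | .fcons Q Γ, Δ => .trans (.swapff P Q _) (.fcons Q (perm_fcons_mid P Γ Δ))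
  | .bcons S Γ, Δ => .trans (.swapfb P S _) (.bcons (Perm.refl S) (perm_fcons_mid P Γ Δ))

theorem perm_bcons_mid (S : NSeq) : ∀ (Γ Δ : NSeq),
    NSeq.Perm (.bcons S (Γ.append Δ)) (Γ.append (.bcons S Δ))
  | .nil, Δ => Perm.refl _
  | .fcons Q Γ, Δ => .trans (.swapbf Q S _) (.fcons Q (perm_bcons_mid S Γ Δ))
  | .bcons T Γ, Δ => .trans (.swapbb S T _) (.bcons (Perm.refl T) (perm_bcons_mid S Γ Δ))

theorem perm_append_swap : ∀ (Γ₁ Γ₂ Δ : NSeq),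
    NSeq.Perm (Γ₁.append (Γ₂.append Δ)) (Γ₂.append (Γ₁.append Δ))
  | .nil, Γ₂, Δ => Perm.refl _
  | .fcons P Γ₁, Γ₂, Δ =>
      .trans (.fcons P (perm_append_swap Γ₁ Γ₂ Δ)) (perm_fcons_mid P Γ₂ _)
  | .bcons S Γ₁, Γ₂, Δ =>
      .trans (.bcons (Perm.refl S) (perm_append_swap Γ₁ Γ₂ Δ)) (perm_bcons_mid S Γ₂ _)

/-- Single-formula-block inversion for `ORep`. -/
theorem fcons_split {A B P : Formula} {Γ E : NSeq} (h : ORep A B (.fcons P Γ) E) :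
    ∃ pp Γ', E = pp.append Γ' ∧ ORep A B (.fcons P .nil) pp ∧ ORep A B Γ Γ' := by
  cases h with
  | fcons _ h => exact ⟨.fcons P .nil, _, rfl, .fcons P .nil, h⟩
  | rep h => exact ⟨.fcons A (.fcons B .nil), _, rfl, .rep .nil, h⟩

/-- Commutation of `ORep` with `Perm`. -/
theorem perm_comm {A B : Formula} : ∀ {G0 G}, NSeq.Perm G0 G → ∀ {G'}, ORep A B G G' →
    ∃ G0', ORep A B G0 G0' ∧ NSeq.Perm G0' G' := by
  intro G0 G hperm
  induction hperm with
  | nil => intro G' h; cases h; exact ⟨.nil, .nil, .nil⟩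
  | fcons P hΓΔ ih =>
    intro G' h
    obtain ⟨pp, Δ', rfl, hp, hd⟩ := fcons_split h
    obtain ⟨Γ'', hr, hpm⟩ := ih hd
    exact ⟨pp.append Γ'', hp.append hr, perm_append_left pp hpm⟩
  | bcons hS hΓΔ ihS ih =>
    intro G' h
    cases h with
    | bcons hs hd =>
      obtain ⟨S'', hrS, hpS⟩ := ihS hs
      obtain ⟨Γ'', hr, hpm⟩ := ih hd
      exact ⟨.bcons S'' Γ'', .bcons hrS hr, .bcons hpS hpm⟩
  | swapff P Q Γ =>
    intro G' h
    obtain ⟨qq, E₁, rfl, hq, h₁⟩ := fcons_split h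
    obtain ⟨pp, Γ', rfl, hp, hg⟩ := fcons_split h₁
    exact ⟨pp.append (qq.append Γ'), hp.append (hq.append hg),
      perm_append_swap pp qq Γ'⟩
  | swapfb P S Γ =>
    intro G' h
    cases h with
    | bcons hs h₁ =>
      obtain ⟨pp, Γ', rfl, hp, hg⟩ := fcons_split h₁
      exact ⟨pp.append (.bcons _ Γ'), hp.append (.bcons hs hg),
        perm_append_swap pp (.bcons _ .nil) Γ'⟩
  | swapbf P S Γ =>
    intro G' h
    obtain ⟨pp, E₁, rfl, hp, h₁⟩ := fcons_split h
    cases h₁ with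
    | bcons hs hg =>
      exact ⟨.bcons _ (pp.append _), .bcons hs (hp.append hg),
        perm_append_swap (.bcons _ .nil) pp _⟩
  | swapbb S T Γ =>
    intro G' h
    cases h with
    | bcons hs h₁ =>
      cases h₁ with
      | bcons ht hg =>
        exact ⟨.bcons _ (.bcons _ _), .bcons ht (.bcons hs hg), .swapbb _ _ _⟩
  | trans h₁ h₂ ih₁ ih₂ =>
    intro G' h
    obtain ⟨G1', hr₁, hp₁⟩ := ih₂ h
    obtain ⟨G0', hr₀, hp₀⟩ := ih₁ hr₁
    exact ⟨G0', hr₀, .trans hp₀ hp₁⟩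

/-- Height monotonicity. -/
theorem Prf.mono {Xk X4 : Set ℕ} {ρ : ℕ → Prop} : ∀ {h Γ}, Prf Xk X4 ρ h Γ →
    Prf Xk X4 ρ (h+1) Γ := by
  intro h Γ π
  induction π with
  | id Γ p h => exact .id Γ p (h+1)
  | orR Γ A B _ ih => exact .orR Γ A B ih
  | andR Γ A B _ _ ih₁ ih₂ => exact .andR Γ A B ih₁ ih₂
  | boxR Γ A _ ih => exact .boxR Γ A ih
  | diaR Γ A Δ _ ih => exact .diaR Γ A Δ ih
  | propk Γ A Δs Δn hn _ ih => exact .propk Γ A Δs Δn hn ih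
  | prop4 Γ A Δs Δl hn _ ih => exact .prop4 Γ A Δs Δl hn ih
  | cut Γ A hA _ _ ih₁ ih₂ => exact .cut Γ A hA ih₁ ih₂
  | exch hp _ ih => exact .exch hp ih

/-- Main lemma: `ORep` is height-preserving admissible. -/
theorem main {A B : Formula} {Xk : Set ℕ} {ρ : ℕ → Prop} :
    ∀ {h G}, Prf Xk ∅ ρ h G → ∀ {G'}, ORep A B G G' → Prf Xk ∅ ρ h G' := by
  intro h G π
  induction π with
  | id D p h =>
    intro G' hr
    obtain ⟨D', K', rfl, hc, hk⟩ := fill_split D hr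
    cases hk with
    | fcons _ hk =>
      cases hk with
      | fcons _ hk => cases hk; exact .id D' p h
  | orR D A' B' hprem ih =>
    intro G' hr
    obtain ⟨D', K', rfl, hc, hk⟩ := fill_split D hr
    cases hk with
    | fcons _ hk =>
      cases hk
      exact .orR D' A' B' (ih (ORep.fill hc (.fcons A' (.fcons B' .nil))))
    | rep hk =>
      cases hk
      exact Prf.mono (ih (ORep.fill hc (.fcons A (.fcons B .nil))))
  | andR D A' B' _ _ ih₁ ih₂ =>
    intro G' hr
    obtain ⟨D', K', rfl, hc, hk⟩ := fill_split D hr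
    cases hk with
    | fcons _ hk =>
      cases hk
      exact .andR D' A' B' (ih₁ (ORep.fill hc (.fcons A' .nil)))
        (ih₂ (ORep.fill hc (.fcons B' .nil)))
  | boxR D A' _ ih =>
    intro G' hr
    obtain ⟨D', K', rfl, hc, hk⟩ := fill_split D hr
    cases hk with
    | fcons _ hk =>
      cases hk
      exact .boxR D' A' (ih (ORep.fill hc (.bcons (.fcons A' .nil) .nil)))
  | diaR D A' Δ _ ih =>
    intro G' hr
    obtain ⟨D', K', rfl, hc, hk⟩ := fill_split D hr
    cases hk with
    | fcons _ hk =>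
      cases hk with
      | bcons hs hk =>
        cases hk
        exact .diaR D' A' _
          (ih (ORep.fill hc (.fcons A'.dia (.bcons (.fcons A' hs) .nil))))
  | propk D A' Δs Δn hn _ ih =>
    intro G' hr
    obtain ⟨D', K', rfl, hc, hk⟩ := fill_split D hr
    cases hk with
    | fcons _ hk =>
      obtain ⟨Δs', Δn', rfl, hl, hnrep⟩ := nestBox_split hk
      have hlen : Δs'.length + 1 ∈ Xk := hl.length_eq ▸ hn
      exact .propk D' A' Δs' Δn' hlen
        (ih (ORep.fill hc (.fcons A'.dia (ORep.nestBox hl (.fcons A' hnrep)))))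
  | prop4 D A' Δs Δl hn _ _ =>
    exact absurd hn (Set.notMem_empty _)
  | cut D A' hA _ _ ih₁ ih₂ =>
    intro G' hr
    obtain ⟨D', K', rfl, hc, hk⟩ := fill_split D hr
    cases hk
    exact .cut D' A' hA (ih₁ (ORep.fill hc (.fcons A' .nil)))
      (ih₂ (ORep.fill hc (.fcons A'.negf .nil)))
  | exch hp _ ih =>
    intro G' hr
    obtain ⟨G0', hr₀, hp₀⟩ := perm_comm hp hr
    exact .exch hp₀ (ih hr₀)

end OrInv

/-- `∨⁻¹` is height-preserving admissible in `nK + ♦ₖX + cut`. -/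
theorem orInv_admissible (X : Set ℕ) (hX : X ⊆ {n : ℕ | 1 < n}) (Γ : Ctx) (A B : Formula)
    (h : ℕ) (π : Prf X ∅ cutAll h (Γ.fill (NSeq.fcons (.or A B) NSeq.nil))) :
    Prf X ∅ cutAll h (Γ.fill (NSeq.fcons A (NSeq.fcons B NSeq.nil))) :=
  OrInv.main π (OrInv.ORep.fill (OrInv.ORepC.refl A B Γ) (.rep .nil))
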